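/- Let s, m be positive integers, n = s * 2^m, and let C_0^{(s)} be the code of length n whose codewords are the s-fold concatenations (c|c|...|c) of codewords c of the extended simplex code of length M = 2^m. Then for every y in F_2^n there exists x in C_0^{(s)} with |n - 2 d(y,x)| <= sqrt(sn); hence C_0^{(s)} is a λ-almost-balancing set for λ = floor(sqrt(sn)/2), and its dimension is m. -/

import Mathlib

/-- The `s`-fold concatenation of the extended simplex codeword of message `v`:
a word of length `n = s * 2^m`, with coordinates indexed by `Fin s × (Fin m → ZMod 2)`,
whose coordinate at `(j, u)` is the inner product `⟨v,u⟩`. -/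
def concatSimplexWord (s m : ℕ) (v : Fin m → ZMod 2) :
    (Fin s × (Fin m → ZMod 2)) → ZMod 2 :=
  fun p => ∑ i, v i * p.2 i

/-- The real-valued sign character of `ZMod 2`. -/
noncomputable def sgn (a : ZMod 2) : ℝ := if a = 0 then 1 else -1

lemma zmod2_cases (a : ZMod 2) : a = 0 ∨ a = 1 := by revert a; decide

lemma sgn_add (a b : ZMod 2) : sgn (a + b) = sgn a * sgn b := by
  rcases zmod2_cases a with rfl|rfl <;> rcases zmod2_cases b with rfl|rfl <;>
    simp [sgn, show (1+1 : ZMod 2) = 0 from by decide]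

lemma sgn_abs (a : ZMod 2) : |sgn a| ≤ 1 := by
  rcases zmod2_cases a with rfl|rfl <;> simp [sgn]

lemma sgn_sum {ι : Type*} [DecidableEq ι] (t : Finset ι) (g : ι → ZMod 2) :
    sgn (∑ i ∈ t, g i) = ∏ i ∈ t, sgn (g i) := by
  induction t using Finset.induction with
  | empty => simp [sgn]
  | insert _ _ h ih => rw [Finset.sum_insert h, Finset.prod_insert h, sgn_add, ih]

lemma zmod2_sum (f : ZMod 2 → ℝ) : ∑ a : ZMod 2, f a = f 0 + f 1 := by
  rw [show (Finset.univ : Finset (ZMod 2)) = {0,1} from by decide]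
  rw [Finset.sum_insert (by decide), Finset.sum_singleton]

/-- Character orthogonality for `(ZMod 2)^m`. -/
lemma char_sum (m : ℕ) (w : Fin m → ZMod 2) :
    ∑ v : Fin m → ZMod 2, sgn (∑ i, v i * w i) = if w = 0 then ((2^m : ℕ) : ℝ) else 0 := by
  have h1 : ∀ v : Fin m → ZMod 2, sgn (∑ i, v i * w i) = ∏ i, sgn (v i * w i) :=
    fun v => sgn_sum _ _
  simp_rw [h1]
  rw [← Fintype.piFinset_univ, Finset.sum_prod_piFinset Finset.univ (fun i a => sgn (a * w i))]
  have h2 : ∀ i, (∑ a : ZMod 2, sgn (a * w i)) = if w i = 0 then (2:ℝ) else 0 := by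
    intro i
    rw [zmod2_sum]
    rcases zmod2_cases (w i) with h|h <;> simp [h, sgn] <;> norm_num
  simp_rw [h2]
  by_cases hw : w = 0
  · subst hw; simp
  · rw [if_neg hw]
    obtain ⟨i, hi⟩ : ∃ i, w i ≠ 0 := by
      by_contra h; push_neg at h; exact hw (funext h)
    exact Finset.prod_eq_zero (Finset.mem_univ i) (by simp [hi])

/-- The signed correlation sum computes `n - 2 d(y,x)`. -/
lemma sum_sgn_eq {ι : Type*} [Fintype ι] (x y : ι → ZMod 2) :
    ∑ p, sgn (y p + x p) = (Fintype.card ι : ℝ) - 2 * hammingDist y x := by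
  classical
  have h : ∀ p, sgn (y p + x p) = 1 - 2 * (if y p = x p then (0:ℝ) else 1) := by
    intro p
    rcases zmod2_cases (y p) with h1|h1 <;> rcases zmod2_cases (x p) with h2|h2 <;>
      simp [h1, h2, sgn, show (1+1:ZMod 2) = 0 from by decide] <;> norm_num
  simp_rw [h]
  rw [Finset.sum_sub_distrib, Finset.sum_const, ← Finset.mul_sum]
  have : ∑ p, (if y p = x p then (0:ℝ) else 1) = hammingDist y x := by
    rw [hammingDist, Finset.card_filter]
    push_cast
    exact Finset.sum_congr rfl fun p _ => by by_cases h : y p = x p <;> simp [h]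
  rw [this, nsmul_eq_mul, mul_one, Finset.card_univ]

/-- The sum over all messages of the squared correlations equals
`2^m` times a sum of `2^m` squares, each at most `s^2`. -/
lemma key (s m : ℕ) (y : Fin s × (Fin m → ZMod 2) → ZMod 2) :
    ∑ v : Fin m → ZMod 2, (∑ p, sgn (y p + concatSimplexWord s m v p))^2
      = ((2^m : ℕ) : ℝ) * ∑ u : Fin m → ZMod 2, (∑ j : Fin s, sgn (y (j, u)))^2 := by
  classical
  have step1 : ∀ v : Fin m → ZMod 2,
      (∑ p, sgn (y p + concatSimplexWord s m v p))^2
        = ∑ p, ∑ q, (sgn (y p) * sgn (y q)) * sgn (∑ i, v i * (p.2 i + q.2 i)) := by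
    intro v
    rw [sq, Finset.sum_mul_sum]
    refine Finset.sum_congr rfl fun p _ => Finset.sum_congr rfl fun q _ => ?_
    have : (∑ i, v i * (p.2 i + q.2 i))
        = concatSimplexWord s m v p + concatSimplexWord s m v q := by
      simp [concatSimplexWord, mul_add, Finset.sum_add_distrib]
    rw [this, sgn_add, sgn_add, sgn_add]
    ring
  simp_rw [step1]
  rw [Finset.sum_comm]
  have step2 : ∀ p : Fin s × (Fin m → ZMod 2),
      (∑ v : Fin m → ZMod 2, ∑ q, (sgn (y p) * sgn (y q)) * sgn (∑ i, v i * (p.2 i + q.2 i)))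
        = ∑ q, (sgn (y p) * sgn (y q)) * (if p.2 = q.2 then ((2^m : ℕ) : ℝ) else 0) := by
    intro p
    rw [Finset.sum_comm]
    refine Finset.sum_congr rfl fun q _ => ?_
    rw [← Finset.mul_sum, char_sum m (fun i => p.2 i + q.2 i)]
    congr 1
    have : (fun i => p.2 i + q.2 i) = 0 ↔ p.2 = q.2 := by
      constructor
      · intro h; funext i
        have hi := congrFun h i
        rcases zmod2_cases (p.2 i) with h1|h1 <;> rcases zmod2_cases (q.2 i) with h2|h2 <;>
          simp_all
      · intro h; funext i; rw [h]
        rcases zmod2_cases (q.2 i) with h2|h2 <;> simp [h2] <;> decide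
    simp [this]
  simp_rw [step2]
  rw [Fintype.sum_prod_type]
  simp_rw [Fintype.sum_prod_type]
  rw [Finset.sum_comm, Finset.mul_sum]
  refine Finset.sum_congr rfl fun u _ => ?_
  simp_rw [mul_ite, mul_zero, Finset.sum_ite_eq Finset.univ u, Finset.mem_univ, if_true]
  rw [sq, Finset.sum_mul_sum, Finset.mul_sum]
  refine Finset.sum_congr rfl fun j _ => ?_
  rw [Finset.mul_sum]
  refine Finset.sum_congr rfl fun k _ => ?_
  ring

/-- `concatSimplexWord s m` as a linear map. -/
def concatSimplexMap (s m : ℕ) :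
    (Fin m → ZMod 2) →ₗ[ZMod 2] ((Fin s × (Fin m → ZMod 2)) → ZMod 2) where
  toFun := concatSimplexWord s m
  map_add' v w := by
    funext p
    simp [concatSimplexWord, add_mul, Finset.sum_add_distrib]
  map_smul' c v := by
    funext p
    simp [concatSimplexWord, Finset.mul_sum, mul_assoc]

lemma concatSimplexMap_injective (s m : ℕ) (hs : 0 < s) :
    Function.Injective (concatSimplexMap s m) := by
  rw [← LinearMap.ker_eq_bot, LinearMap.ker_eq_bot']
  intro v hv
  funext i
  have h := congrFun hv (⟨0, hs⟩, Pi.single i 1)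
  simp only [concatSimplexMap, LinearMap.coe_mk, AddHom.coe_mk, concatSimplexWord,
    Pi.zero_apply] at h
  rwa [Finset.sum_eq_single i (fun k _ hk => by simp [Pi.single_eq_of_ne hk])
    (fun h => absurd (Finset.mem_univ i) h), Pi.single_eq_same, mul_one] at h

theorem stmt17 (s m : ℕ) (hs : 0 < s) (hm : 0 < m) :
    (∀ y : (Fin s × (Fin m → ZMod 2)) → ZMod 2,
      ∃ v : Fin m → ZMod 2,
        |((s * 2 ^ m : ℕ) : ℝ) - 2 * hammingDist y (concatSimplexWord s m v)|
          ≤ Real.sqrt ((s : ℝ) * (s * 2 ^ m : ℕ))) ∧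
    Module.finrank (ZMod 2)
        ↥(Submodule.span (ZMod 2) (Set.range (concatSimplexWord s m))) = m := by
  constructor
  · intro y
    -- bound on the sum of squares
    have hbound : ∑ v : Fin m → ZMod 2, (∑ p, sgn (y p + concatSimplexWord s m v p))^2
        ≤ ∑ _v : Fin m → ZMod 2, ((s:ℝ) * ((s * 2^m : ℕ) : ℝ)) := by
      rw [key s m y, Finset.sum_const, Finset.card_univ]
      have hcard : Fintype.card (Fin m → ZMod 2) = 2^m := by
        simp [Fintype.card_fun]
      rw [hcard]
      have hsq : ∀ u : Fin m → ZMod 2, (∑ j : Fin s, sgn (y (j, u)))^2 ≤ (s:ℝ)^2 := by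
        intro u
        have habs : |∑ j : Fin s, sgn (y (j, u))| ≤ (s:ℝ) := by
          calc |∑ j : Fin s, sgn (y (j, u))| ≤ ∑ j : Fin s, |sgn (y (j, u))| :=
                Finset.abs_sum_le_sum_abs _ _
            _ ≤ ∑ _j : Fin s, (1:ℝ) := Finset.sum_le_sum fun j _ => sgn_abs _
            _ = (s:ℝ) := by simp
        calc (∑ j : Fin s, sgn (y (j, u)))^2 = |∑ j : Fin s, sgn (y (j, u))|^2 := (sq_abs _).symm
          _ ≤ (s:ℝ)^2 := pow_le_pow_left₀ (abs_nonneg _) habs 2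
      calc ((2^m : ℕ):ℝ) * ∑ u : Fin m → ZMod 2, (∑ j : Fin s, sgn (y (j, u)))^2
          ≤ ((2^m : ℕ):ℝ) * ∑ _u : Fin m → ZMod 2, (s:ℝ)^2 := by
            apply mul_le_mul_of_nonneg_left (Finset.sum_le_sum fun u _ => hsq u)
            positivity
        _ = (2^m : ℕ) • ((s:ℝ) * ((s * 2^m : ℕ) : ℝ)) := by
            rw [Finset.sum_const, Finset.card_univ]
            simp [Fintype.card_fun, nsmul_eq_mul]
            push_cast
            ring
    obtain ⟨v, _, hv⟩ := Finset.exists_le_of_sum_le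
      (Finset.univ_nonempty (α := Fin m → ZMod 2)) hbound
    refine ⟨v, ?_⟩
    have heq : ∑ p, sgn (y p + concatSimplexWord s m v p)
        = ((s * 2^m : ℕ) : ℝ) - 2 * hammingDist y (concatSimplexWord s m v) := by
      rw [sum_sgn_eq]
      congr 2
      simp [Fintype.card_prod, Fintype.card_fun]
    rw [← heq]
    exact Real.abs_le_sqrt hv
  · -- dimension
    have hrange : Set.range (concatSimplexWord s m) = ↑(LinearMap.range (concatSimplexMap s m)) := by
      rw [LinearMap.coe_range]
      rfl
    rw [hrange, Submodule.span_eq,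
      LinearMap.finrank_range_of_inj (concatSimplexMap_injective s m hs)]
    simp [Module.finrank_fin_fun]
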